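/- Let r ≥ 1 and let m_1, …, m_r and n_1, …, n_{r-1} be positive integers with gcd(m_i, n_j) = 1 for all 1 ≤ i ≤ j ≤ r−1, and let n_r be any positive integer. Then the group G_{m_1,n_1,…,m_r,n_r} presented by ⟨x_1, …, x_r : x_1^{m_1} = 1, x_i^{n_i} = x_{i+1}^{m_{i+1}} for i = 1, …, r−1, x_r^{n_r} = 1⟩ is isomorphic to the cyclic group ℤ/dℤ, where d = gcd(m_1 m_2 ⋯ m_r, n_r). -/

import Mathlib

def auxE (r' : ℕ) (m : Fin (r' + 1) → ℕ) (b : Fin r' → ℤ) : Fin (r' + 1) → ℤ :=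
  Fin.reverseInduction 1 fun i E => b i * (m i.succ : ℤ) * E

@[simp] lemma auxE_last (r' : ℕ) (m : Fin (r' + 1) → ℕ) (b : Fin r' → ℤ) :
    auxE r' m b (Fin.last r') = 1 := Fin.reverseInduction_last ..

lemma auxE_castSucc (r' : ℕ) (m : Fin (r' + 1) → ℕ) (b : Fin r' → ℤ) (i : Fin r') :
    auxE r' m b i.castSucc = b i * (m i.succ : ℤ) * auxE r' m b i.succ :=
  Fin.reverseInduction_castSucc ..

lemma Iic_succ_fin (r' : ℕ) (i : Fin r') :
    Finset.Iic i.succ = insert i.succ (Finset.Iic i.castSucc) := by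
  ext j
  simp only [Finset.mem_Iic, Finset.mem_insert]
  constructor
  · intro hj
    rcases eq_or_lt_of_le hj with h | h
    · exact Or.inl h
    · exact Or.inr (Fin.le_castSucc_iff.2 h)
  · rintro (rfl | hj)
    · exact le_rfl
    · exact le_of_lt (Fin.le_castSucc_iff.1 hj)


/-- The relators of the group `G_{m_1,n_1,…,m_r,n_r} = ⟨x_1, …, x_r :
x_1^{m_1} = 1, x_i^{n_i} = x_{i+1}^{m_{i+1}} (i = 1, …, r−1), x_r^{n_r} = 1⟩`,
as elements of the free group on `r = r' + 1` generators. -/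
def fullRels (r' : ℕ) (m n : Fin (r' + 1) → ℕ) :
    Set (FreeGroup (Fin (r' + 1))) :=
  {FreeGroup.of (0 : Fin (r' + 1)) ^ m 0} ∪
    Set.range (fun i : Fin r' =>
      FreeGroup.of i.castSucc ^ n i.castSucc * (FreeGroup.of i.succ ^ m i.succ)⁻¹) ∪
    {FreeGroup.of (Fin.last r') ^ n (Fin.last r')}

/-- If `gcd(m_i, n_j) = 1` for all `1 ≤ i ≤ j ≤ r − 1` (and `n_r` is an
arbitrary positive integer), then `G_{m_1,n_1,…,m_r,n_r} ≅ ℤ/dℤ` where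
`d = gcd(m_1 m_2 ⋯ m_r, n_r)`. -/
theorem full_presented_group_iso_zmod_gcd (r' : ℕ)
    (m n : Fin (r' + 1) → ℕ)
    (hm : ∀ i, 0 < m i) (hn : ∀ j, 0 < n j)
    (hgcd : ∀ i j : Fin r', i ≤ j → Nat.gcd (m i.castSucc) (n j.castSucc) = 1) :
    Nonempty (PresentedGroup (fullRels r' m n) ≃*
      Multiplicative (ZMod (Nat.gcd (∏ i, m i) (n (Fin.last r'))))) := by
  set d : ℕ := Nat.gcd (∏ i, m i) (n (Fin.last r')) with hd
  set rels := fullRels r' m n with hrels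
  set x : Fin (r' + 1) → PresentedGroup rels := PresentedGroup.of with hx
  set g : PresentedGroup rels := x (Fin.last r') with hg
  set M : Fin (r' + 1) → ℕ := fun i => ∏ j ∈ Finset.Iic i, m j with hM
  -- relations hold in the presented group
  have hrel : ∀ w ∈ rels, PresentedGroup.mk rels w = 1 := fun w hw =>
    (QuotientGroup.eq_one_iff w).2 (Subgroup.subset_normalClosure hw)
  have h1 : x 0 ^ m 0 = 1 := by
    have := hrel _ (Or.inl (Or.inl rfl))
    rw [map_pow] at this; exact this
  have h2 : ∀ i : Fin r', x i.castSucc ^ n i.castSucc = x i.succ ^ m i.succ := by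
    intro i
    have := hrel _ (Or.inl (Or.inr ⟨i, rfl⟩))
    simp only [map_mul, map_inv, map_pow] at this
    rw [mul_inv_eq_one] at this
    exact this
  have h3 : g ^ n (Fin.last r') = 1 := by
    have := hrel _ (Or.inr rfl)
    rw [map_pow] at this; exact this
  -- M facts
  have hM0 : M 0 = m 0 := by
    rw [hM]
    have : Finset.Iic (0 : Fin (r' + 1)) = {0} := by
      ext j; simp [Fin.le_zero_iff]
    simp [this]
  have hMstep : ∀ i : Fin r', M i.succ = M i.castSucc * m i.succ := by
    intro i
    rw [hM]
    simp only
    rw [Iic_succ_fin, Finset.prod_insert (by simp)]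
    ring
  have hMlast : M (Fin.last r') = ∏ i, m i := by
    have : Finset.Iic (Fin.last r') = (Finset.univ : Finset (Fin (r'+1))) := by
      ext j; simp [Fin.le_last]
    rw [hM]; simp only [this]
  -- orders
  have hord : ∀ i, x i ^ M i = 1 := by
    intro i
    induction i using Fin.induction with
    | zero => rw [hM0]; exact h1
    | succ i ih =>
      rw [hMstep i, mul_comm, pow_mul, ← h2 i, ← pow_mul, mul_comm, pow_mul, ih, one_pow]
  -- coprimality: n i coprime to M i (for i = castSucc)
  have hcop : ∀ i : Fin r', Nat.Coprime (n i.castSucc) (M i.castSucc) := by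
    intro i
    apply Nat.Coprime.prod_right
    intro j hj
    have hj' : (j : ℕ) ≤ (i : ℕ) := by
      simpa [Fin.le_def] using Finset.mem_Iic.1 hj
    have hjr : (j : ℕ) < r' := lt_of_le_of_lt hj' i.isLt
    set k : Fin r' := ⟨(j : ℕ), hjr⟩ with hk
    have hjk : j = k.castSucc := by
      apply Fin.ext; simp [hk]
    rw [hjk]
    exact Nat.Coprime.symm (hgcd k i (by simp [hk, Fin.le_def, hj']))
  -- Bezout coefficients
  have hbex : ∀ i : Fin r', ∃ b t : ℤ,
      b * (n i.castSucc : ℤ) = 1 + t * (M i.castSucc : ℤ) := by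
    intro i
    have := (Nat.isCoprime_iff_coprime.2 (hcop i))
    obtain ⟨u, v, huv⟩ := this
    exact ⟨u, -v, by linarith⟩
  choose b t hb using hbex
  set E : Fin (r' + 1) → ℤ := auxE r' m b with hE
  -- every generator is a power of g
  have hxg : ∀ i, x i = g ^ E i := by
    intro i
    induction i using Fin.reverseInduction with
    | last => simp [hE, hg]
    | cast i ih =>
      have hzord : x i.castSucc ^ (M i.castSucc : ℤ) = 1 := by
        rw [zpow_natCast]; exact hord _
      calc x i.castSucc = x i.castSucc ^ ((1 : ℤ) + t i * (M i.castSucc : ℤ)) := by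
            rw [zpow_add, zpow_one, mul_comm (t i), zpow_mul, hzord, one_zpow, mul_one]
        _ = x i.castSucc ^ (b i * (n i.castSucc : ℤ)) := by rw [hb]
        _ = (x i.castSucc ^ (n i.castSucc : ℤ)) ^ b i := by
            rw [← zpow_mul, mul_comm]
        _ = (x i.succ ^ (m i.succ : ℤ)) ^ b i := by
            rw [zpow_natCast, zpow_natCast, h2]
        _ = g ^ E i.castSucc := by
            rw [ih, ← zpow_mul, ← zpow_mul, hE, auxE_castSucc]
            ring_nf
  have hdP : (d : ℤ) ∣ ((∏ i, m i : ℕ) : ℤ) := Int.natCast_dvd_natCast.2 (Nat.gcd_dvd_left _ _)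
  have hdN : (d : ℤ) ∣ ((n (Fin.last r') : ℕ) : ℤ) := Int.natCast_dvd_natCast.2 (Nat.gcd_dvd_right _ _)
  have hEc : ∀ i : Fin r', E i.castSucc = b i * (m i.succ : ℤ) * E i.succ :=
    fun i => auxE_castSucc r' m b i
  -- key vanishing claim in ZMod d
  have hC : ∀ i, ((M i : ℤ) : ZMod d) * ((E i : ℤ) : ZMod d) = 0 := by
    intro i
    induction i using Fin.reverseInduction with
    | last =>
      rw [hMlast]
      have : (((∏ i, m i : ℕ) : ℤ) : ZMod d) = 0 :=
        (ZMod.intCast_zmod_eq_zero_iff_dvd _ _).2 hdP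
      rw [this, zero_mul]
    | cast i ih =>
      have h' : ((M i.succ : ℤ) : ZMod d) = ((M i.castSucc : ℤ) : ZMod d) * ((m i.succ : ℤ) : ZMod d) := by
        rw [hMstep i]; push_cast; ring
      rw [hEc i]
      push_cast
      push_cast at ih h'
      linear_combination ((b i : ZMod d)) * ih - ((b i : ZMod d)) * (((E i.succ : ℤ)) : ZMod d) * h'
  -- the map to ZMod d
  have hf : ∀ w ∈ rels, FreeGroup.lift
      (fun i => Multiplicative.ofAdd (((E i : ℤ) : ZMod d))) w = 1 := by
    intro w hw
    rcases hw with (hw | ⟨i, rfl⟩) | hw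
    · rw [Set.mem_singleton_iff.1 hw]
      rw [map_pow, FreeGroup.lift_apply_of, ← ofAdd_nsmul, nsmul_eq_mul]
      have h0 : ((m 0 : ZMod d)) * ((E 0 : ℤ) : ZMod d) = 0 := by
        have h := hC 0
        rw [hM0] at h
        push_cast at h ⊢
        exact h
      rw [h0, ofAdd_zero]
    · simp only [map_mul, map_inv, map_pow, FreeGroup.lift_apply_of]
      rw [mul_inv_eq_one, ← ofAdd_nsmul, ← ofAdd_nsmul, nsmul_eq_mul, nsmul_eq_mul]
      congr 1
      have hbz : ((b i : ZMod d)) * ((n i.castSucc : ZMod d)) =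
          1 + ((t i : ZMod d)) * ((M i.castSucc : ZMod d)) := by
        have := congrArg (fun z : ℤ => (z : ZMod d)) (hb i)
        push_cast at this
        exact this
      have hcs := hC i.castSucc
      have hss := hC i.succ
      have h' : ((M i.succ : ZMod d)) = ((M i.castSucc : ZMod d)) * ((m i.succ : ZMod d)) := by
        rw [hMstep i]; push_cast; ring
      have hec : ((E i.castSucc : ℤ) : ZMod d) =
          ((b i : ZMod d)) * ((m i.succ : ZMod d)) * ((E i.succ : ℤ) : ZMod d) := by
        rw [hEc i]; push_cast; ring
      push_cast at hcs hss ⊢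
      rw [hec]
      linear_combination ((m i.succ : ZMod d)) * (((E i.succ : ℤ)) : ZMod d) * hbz
        + ((t i : ZMod d)) * hss
        - ((t i : ZMod d)) * (((E i.succ : ℤ)) : ZMod d) * h'
    · rw [Set.mem_singleton_iff.1 hw]
      rw [map_pow, FreeGroup.lift_apply_of, ← ofAdd_nsmul, nsmul_eq_mul]
      have hz : ((n (Fin.last r') : ZMod d)) = 0 := by
        have : (((n (Fin.last r') : ℕ) : ℤ) : ZMod d) = 0 :=
          (ZMod.intCast_zmod_eq_zero_iff_dvd _ _).2 hdN
        push_cast at this ⊢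
        exact this
      have hEl : E (Fin.last r') = 1 := auxE_last r' m b
      rw [hEl, hz]
      norm_num
  set φ : PresentedGroup rels →* Multiplicative (ZMod d) := PresentedGroup.toGroup hf with hφ
  have hgP : g ^ (∏ i, m i) = 1 := by rw [← hMlast]; exact hord _
  have hgd : g ^ ((d : ℕ) : ℤ) = 1 := by
    have hbez : (d : ℤ) = (∏ i, m i : ℕ) * Nat.gcdA (∏ i, m i) (n (Fin.last r'))
        + (n (Fin.last r') : ℕ) * Nat.gcdB (∏ i, m i) (n (Fin.last r')) := by
      rw [hd]; exact Nat.gcd_eq_gcd_ab _ _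
    rw [hbez, zpow_add, zpow_mul, zpow_mul, zpow_natCast, zpow_natCast, hgP, h3,
      one_zpow, one_zpow, one_mul]
  set ψa : ZMod d →+ Additive (PresentedGroup rels) :=
    ZMod.lift d ⟨zmultiplesHom (Additive (PresentedGroup rels)) (Additive.ofMul g), by
      simp only [zmultiplesHom_apply]
      rw [← ofMul_zpow, hgd]
      rfl⟩ with hψa
  set ψ : Multiplicative (ZMod d) →* PresentedGroup rels :=
    AddMonoidHom.toMultiplicativeLeft ψa with hψ
  have hψeval : ∀ k : ℤ, ψ (Multiplicative.ofAdd ((k : ZMod d))) = g ^ k := by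
    intro k
    rw [hψ]
    rw [AddMonoidHom.coe_toMultiplicativeLeft]
    simp only [Function.comp_apply, toAdd_ofAdd]
    rw [hψa, ZMod.lift_coe]
    simp [zmultiplesHom_apply, ← ofMul_zpow]
  have hφof : ∀ i, φ (x i) = Multiplicative.ofAdd (((E i : ℤ) : ZMod d)) := by
    intro i
    rw [hφ, hx]
    exact PresentedGroup.toGroup.of hf
  have left1 : ψ.comp φ = MonoidHom.id _ := by
    ext i
    simp only [MonoidHom.comp_apply, MonoidHom.id_apply]
    rw [show (PresentedGroup.of i : PresentedGroup rels) = x i from rfl, hφof i, hψeval (E i),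
      ← hxg i]
  have right1 : φ.comp ψ = MonoidHom.id _ := by
    apply MonoidHom.ext
    intro c
    obtain ⟨k, hk⟩ := ZMod.intCast_surjective (Multiplicative.toAdd c)
    have hc : c = Multiplicative.ofAdd ((k : ZMod d)) := by
      rw [hk]; rfl
    rw [hc]
    simp only [MonoidHom.comp_apply, MonoidHom.id_apply]
    rw [hψeval k]
    rw [map_zpow, show g = x (Fin.last r') from rfl, hφof,
      show E (Fin.last r') = 1 from auxE_last r' m b]
    rw [← ofAdd_zsmul]
    norm_num
  exact ⟨MonoidHom.toMulEquiv φ ψ left1 right1⟩
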